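/- arXiv:2311.13738 — 2 statements merged into one kernel-verified Lean document; each statement's English description precedes it below -/
import Mathlib

section
/- Correctness of perturbed bit extraction: Let n ≥ 1 be an integer, L > 0, and let π₁, …, π_n ∈ ℝ. Given x ∈ [0,1), define x₀ = x and, for i = 1, …, n, b_i = trunc((x_{i−1} − 1/2^i)/L + π_i) and x_i = x_{i−1} − b_i/2^i. If x does not lie in the interval [k/2ⁿ − (max_i |π_i|)/L, k/2ⁿ + L + (max_i |π_i|)/L] for any integer k ∈ {0, 1, …, 2ⁿ − 1}, then each b_i ∈ {0, 1} and the b_i are exactly the leading n binary digits of x, i.e., Σ_{i=1}^{n} b_i · 2^{n−i} = ⌊2ⁿ · x⌋. -/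
/-- Truncation to the unit interval. -/
noncomputable def trunc (z : ℝ) : ℝ := min 1 (max 0 z)

/-- The sequence `x₀ = x`, `x_i = x_{i−1} − b_i / 2^i`, where
`b_i = trunc((x_{i−1} − 1/2^i)/L + π_i)`. -/
noncomputable def xSeq (L : ℝ) (π : ℕ → ℝ) (x : ℝ) : ℕ → ℝ
  | 0 => x
  | i + 1 =>
      xSeq L π x i - trunc ((xSeq L π x i - 1 / 2 ^ (i + 1)) / L + π (i + 1)) / 2 ^ (i + 1)

/-- The bits extracted by the perturbed bit-extraction circuit:
`b_i = trunc((x_{i−1} − 1/2^i)/L + π_i)`. -/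
noncomputable def bSeq (L : ℝ) (π : ℕ → ℝ) (x : ℝ) (i : ℕ) : ℝ :=
  trunc ((xSeq L π x (i - 1) - 1 / 2 ^ i) / L + π i)

lemma telescope (f : ℕ → ℝ) (N : ℕ) :
    ∑ i ∈ Finset.Icc 1 N, (f i - 2 * f (i-1)) * 2^(N-i) = f N - 2^N * f 0 := by
  induction N with
  | zero => simp
  | succ N ih =>
    rw [Finset.sum_Icc_succ_top (Nat.le_add_left 1 N)]
    have h : ∀ i ∈ Finset.Icc 1 N, (f i - 2 * f (i-1)) * 2^(N+1-i)
        = 2 * ((f i - 2 * f (i-1)) * 2^(N-i)) := by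
      intro i hi
      simp only [Finset.mem_Icc] at hi
      have : N + 1 - i = (N - i) + 1 := by omega
      rw [this]; ring
    rw [Finset.sum_congr rfl h, ← Finset.mul_sum, ih]
    simp
    ring

set_option maxHeartbeats 1600000 in
/-- Correctness of perturbed bit extraction: if `x` avoids all the bad regions, then the
extracted bits are exactly the leading `n` binary digits of `x`. -/
theorem extractBits_correct (n : ℕ) (hn : 1 ≤ n) (L : ℝ) (hL : 0 < L)
    (π : ℕ → ℝ) (x : ℝ) (hx : x ∈ Set.Ico (0 : ℝ) 1)
    (M : ℝ) (hM : ∀ i, 1 ≤ i → i ≤ n → |π i| ≤ M)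
    (hbad : ∀ k : ℕ, k < 2 ^ n →
      x ∉ Set.Icc ((k : ℝ) / 2 ^ n - M / L) ((k : ℝ) / 2 ^ n + L + M / L)) :
    (∀ i, 1 ≤ i → i ≤ n → bSeq L π x i = 0 ∨ bSeq L π x i = 1) ∧
    (∑ i ∈ Finset.Icc 1 n, bSeq L π x i * 2 ^ (n - i)) = (⌊(2 : ℝ) ^ n * x⌋ : ℝ) := by
  obtain ⟨hx0, hx1⟩ := hx
  set m : ℕ → ℤ := fun i => ⌊(2:ℝ)^i * x⌋ with hm
  have hM0 : 0 ≤ M := le_trans (abs_nonneg _) (hM 1 le_rfl hn)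
  have hMLnn : 0 ≤ M / L := div_nonneg hM0 hL.le
  have hL1 : L < 1 := by
    by_contra h
    push_neg at h
    refine hbad 0 (Nat.pow_pos (by norm_num)) ⟨?_, ?_⟩
    · simp; linarith
    · simp; linarith
  have hmlb : ∀ i, 0 ≤ m i := fun i => Int.floor_nonneg.2 (by positivity)
  have hmub : ∀ i, m i < 2 ^ i := by
    intro i
    have h2 : (0:ℝ) < 2 ^ i := by positivity
    have : (2:ℝ)^i * x < 2^i := by nlinarith
    exact_mod_cast Int.floor_lt.2 (by push_cast; exact this)
  have hm0 : m 0 = 0 := by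
    simp only [hm, pow_zero, one_mul]
    exact Int.floor_eq_zero_iff.2 ⟨hx0, hx1⟩
  have key : ∀ i, i ≤ n → xSeq L π x i = x - (m i : ℝ) / 2 ^ i := by
    intro i
    induction i with
    | zero => intro _; simp [xSeq, hm0]
    | succ i ih =>
      intro hi1
      have hin : i ≤ n := Nat.le_of_succ_le hi1
      have hxi := ih hin
      have hmi0 : 0 ≤ m i := hmlb i
      have hmiub : m i < 2 ^ i := hmub i
      have hπ := abs_le.1 (hM (i+1) (Nat.le_add_left 1 i) hi1)
      set c : ℝ := (2 * (m i : ℝ) + 1) / 2 ^ (i+1) with hc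
      set k : ℕ := (2 * (m i).toNat + 1) * 2 ^ (n - (i+1)) with hk
      have hkn : k < 2 ^ n := by
        have h2 : (m i).toNat < 2 ^ i := by
          have h3 : ((m i).toNat : ℤ) < 2 ^ i := by rwa [Int.toNat_of_nonneg hmi0]
          exact_mod_cast h3
        have h1 : 2 * (m i).toNat + 1 < 2 ^ (i+1) := by
          rw [pow_succ]; omega
        calc k < 2^(i+1) * 2^(n-(i+1)) :=
              mul_lt_mul_of_pos_right h1 (Nat.pow_pos (by norm_num))
          _ = 2 ^ n := by rw [← pow_add]; congr 1; omega
      have h2n : (2:ℝ)^n = 2^(i+1) * 2^(n-(i+1)) := by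
        rw [← pow_add]; congr 1; omega
      have hkr : (k : ℝ) / 2 ^ n = c := by
        have hkc : (k:ℝ) = (2*(m i : ℝ) + 1) * 2^(n-(i+1)) := by
          have ht : (((m i).toNat : ℕ) : ℝ) = (m i : ℝ) := by
            exact_mod_cast congrArg (Int.cast : ℤ → ℝ) (Int.toNat_of_nonneg hmi0)
          simp only [hk]
          push_cast [ht]
          ring
        rw [hkc, h2n, hc]
        have h1 : ((2:ℝ)^(i+1)) ≠ 0 := by positivity
        have h2 : ((2:ℝ)^(n-(i+1))) ≠ 0 := by positivity
        field_simp
      have hb := hbad k hkn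
      rw [Set.mem_Icc, not_and_or] at hb
      push_neg at hb
      rw [hkr] at hb
      have h2ip : (0:ℝ) < 2^(i+1) := by positivity
      have h2i : (0:ℝ) < 2^i := by positivity
      have hcx : x - (m i:ℝ)/2^i - 1/2^(i+1) = x - c := by
        rw [hc]; field_simp; ring
      have hfle := Int.floor_le ((2:ℝ)^i * x)
      have hflt := Int.lt_floor_add_one ((2:ℝ)^i * x)
      rcases hb with hA | hB
      · -- bit is 0
        have harg : (xSeq L π x i - 1/2^(i+1))/L + π (i+1) ≤ 0 := by
          rw [hxi, hcx]
          have hML : L * M ≤ M / L := by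
            rw [le_div_iff₀ hL]
            nlinarith [mul_nonneg (mul_nonneg hM0 (by linarith : (0:ℝ) ≤ 1 - L))
              (by linarith : (0:ℝ) ≤ 1 + L)]
          have h1 : x - c ≤ -(L * π (i+1)) := by
            have := mul_le_mul_of_nonneg_left hπ.2 hL.le
            linarith
          have h2 : (x - c)/L ≤ -π (i+1) := by
            rw [div_le_iff₀ hL]; nlinarith
          linarith
        have htr : trunc ((xSeq L π x i - 1/2^(i+1))/L + π (i+1)) = 0 := by
          rw [trunc, max_eq_left harg]
          norm_num
        have hfl : m (i+1) = 2 * m i := by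
          have hxc : x < c := by linarith
          have hub : (2:ℝ)^(i+1) * x < 2*(m i : ℝ) + 1 := by
            rw [hc] at hxc
            have := (lt_div_iff₀ h2ip).1 hxc
            linarith [mul_comm x ((2:ℝ)^(i+1))]
          have hlb : (2:ℝ)*(m i : ℝ) ≤ 2^(i+1)*x := by
            rw [pow_succ]; nlinarith
          have h1 : 2*m i ≤ m (i+1) := Int.le_floor.2 (by push_cast; linarith)
          have h2 : m (i+1) < 2*m i + 1 := Int.floor_lt.2 (by push_cast; linarith)
          omega
        show xSeq L π x i - trunc ((xSeq L π x i - 1 / 2 ^ (i + 1)) / L + π (i + 1)) / 2 ^ (i + 1)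
            = x - (m (i+1) : ℝ) / 2 ^ (i+1)
        rw [htr, hxi, hfl]
        push_cast
        rw [pow_succ]
        field_simp
        ring
      · -- bit is 1
        have harg : 1 ≤ (xSeq L π x i - 1/2^(i+1))/L + π (i+1) := by
          rw [hxi, hcx]
          have hML : L * M ≤ M / L := by
            rw [le_div_iff₀ hL]
            nlinarith [mul_nonneg (mul_nonneg hM0 (by linarith : (0:ℝ) ≤ 1 - L))
              (by linarith : (0:ℝ) ≤ 1 + L)]
          have h1 : L * (1 - π (i+1)) ≤ x - c := by
            have := mul_le_mul_of_nonneg_left hπ.1 hL.le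
            linarith
          have h2 : 1 - π (i+1) ≤ (x - c)/L := by
            rw [le_div_iff₀ hL]; nlinarith
          linarith
        have htr : trunc ((xSeq L π x i - 1/2^(i+1))/L + π (i+1)) = 1 := by
          have h0 : (0:ℝ) ≤ (xSeq L π x i - 1/2^(i+1))/L + π (i+1) := by linarith
          rw [trunc, max_eq_right h0, min_eq_left harg]
        have hfl : m (i+1) = 2 * m i + 1 := by
          have hxc : c < x := by linarith
          have hlb : 2*(m i : ℝ) + 1 ≤ 2^(i+1)*x := by
            rw [hc] at hxc
            have := (div_lt_iff₀ h2ip).1 hxc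
            linarith [mul_comm x ((2:ℝ)^(i+1))]
          have hub : (2:ℝ)^(i+1)*x < 2*(m i : ℝ) + 2 := by
            rw [pow_succ]; nlinarith
          have h1 : 2*m i + 1 ≤ m (i+1) := Int.le_floor.2 (by push_cast; linarith)
          have h2 : m (i+1) < 2*m i + 2 := Int.floor_lt.2 (by push_cast; linarith)
          omega
        show xSeq L π x i - trunc ((xSeq L π x i - 1 / 2 ^ (i + 1)) / L + π (i + 1)) / 2 ^ (i + 1)
            = x - (m (i+1) : ℝ) / 2 ^ (i+1)
        rw [htr, hxi, hfl]
        push_cast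
        rw [pow_succ]
        field_simp
        ring
  have hbval : ∀ i, 1 ≤ i → i ≤ n → bSeq L π x i = (m i : ℝ) - 2 * (m (i-1) : ℝ) := by
    intro i h1 h2
    obtain ⟨j, rfl⟩ : ∃ j, i = j + 1 := ⟨i - 1, by omega⟩
    have e1 := key j (by omega)
    have e2 := key (j+1) h2
    have e3 : xSeq L π x (j+1) = xSeq L π x j - bSeq L π x (j+1) / 2^(j+1) := by
      simp [xSeq, bSeq]
    simp only [Nat.add_sub_cancel]
    rw [e1, e2] at e3
    have h2j : ((2:ℝ)^j) ≠ 0 := by positivity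
    have h2j1 : ((2:ℝ)^(j+1)) ≠ 0 := by positivity
    field_simp at e3
    have e5 : ((2:ℝ)^j)^2 * 2 * (bSeq L π x (j+1) - ((m (j+1):ℝ) - 2*(m j))) = 0 := by
      linear_combination (2 * (2:ℝ)^j) * e3
    have h := (mul_eq_zero.1 e5).resolve_left (by positivity)
    linarith [h]
  have hb01 : ∀ i, 1 ≤ i → i ≤ n → m i - 2 * m (i-1) = 0 ∨ m i - 2 * m (i-1) = 1 := by
    intro i h1 h2
    obtain ⟨j, rfl⟩ : ∃ j, i = j + 1 := ⟨i - 1, by omega⟩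
    simp only [Nat.add_sub_cancel]
    have hfle := Int.floor_le ((2:ℝ)^j * x)
    have hflt := Int.lt_floor_add_one ((2:ℝ)^j * x)
    have ha : 2 * m j ≤ m (j+1) := Int.le_floor.2 (by push_cast; rw [pow_succ]; nlinarith)
    have hb : m (j+1) < 2 * m j + 2 := Int.floor_lt.2 (by push_cast; rw [pow_succ]; nlinarith)
    omega
  constructor
  · intro i h1 h2
    rw [hbval i h1 h2]
    have hcast : (m i : ℝ) - 2 * (m (i-1) : ℝ) = ((m i - 2 * m (i-1) : ℤ) : ℝ) := by push_cast; ring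
    rw [hcast]
    rcases hb01 i h1 h2 with h | h
    · left; rw [h]; norm_num
    · right; rw [h]; norm_num
  · rw [Finset.sum_congr rfl (fun i hi => by
      simp only [Finset.mem_Icc] at hi
      rw [hbval i hi.1 hi.2])]
    rw [telescope (fun i => (m i : ℝ)) n]
    simp [hm0]
    rfl
end

section
/- Exact simulation of Boolean circuits by perturbed linear circuits: Let a Boolean circuit be given by variables v₁, …, v_N, where v₁, …, v_k are inputs and each variable v_i with i > k is the output of exactly one gate, either a NOT gate v_i = 1 − v_j with j < i, or an AND gate (v_i = 1 if v_j = v_{j'} = 1 and v_i = 0 otherwise) with j, j' < i. Its perturbed linear simulation computes real values w₁, …, w_N as follows: w_i is the i-th input for i ≤ k; for a NOT gate, w_i = 1 − w_j; for an AND gate, w_i = trunc(4·(w_j + w_{j'} − 1.5) + π_i), where π_i ∈ ℝ is the perturbation of that gate. If every input lies in {0, 1} and every perturbation π_i lies in the open interval (−1, 1), then for every i the simulated value w_i lies in {0, 1} and equals the value v_i computed by the Boolean circuit on the same input. -/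
/-- A gate of a Boolean circuit: either a NOT gate or an AND gate, with the indices of its
input variables. -/
inductive BGate where
  | not : ℕ → BGate
  | and : ℕ → ℕ → BGate

/-- The Boolean value of variable `i` of the circuit: variables with index `≤ k` are inputs,
and every other variable is computed by its gate (gates must refer to earlier variables;
out-of-order references default to `false`). -/
def boolVal (k : ℕ) (gate : ℕ → BGate) (inp : ℕ → Bool) (i : ℕ) : Bool :=
  if i ≤ k then inp i
  else
    match gate i with
    | .not j => if h : j < i then !(boolVal k gate inp j) else false
    | .and j j' =>
        if h : j < i ∧ j' < i then (boolVal k gate inp j && boolVal k gate inp j') else false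
termination_by i
decreasing_by all_goals omega

/-- The value of variable `i` in the perturbed linear simulation of the Boolean circuit:
a NOT gate becomes `1 - w_j`, and an AND gate becomes `trunc(4(w_j + w_{j'} − 1.5) + π_i)`. -/
noncomputable def realVal (k : ℕ) (gate : ℕ → BGate) (inp π : ℕ → ℝ) (i : ℕ) : ℝ :=
  if i ≤ k then inp i
  else
    match gate i with
    | .not j => if h : j < i then 1 - realVal k gate inp π j else 0
    | .and j j' =>
        if h : j < i ∧ j' < i then
          trunc (4 * (realVal k gate inp π j + realVal k gate inp π j' - 1.5) + π i)
        else 0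
termination_by i
decreasing_by all_goals omega

lemma trunc_eq_zero {z : ℝ} (h : z ≤ 0) : trunc z = 0 := by
  unfold trunc; rw [max_eq_left h]; simp

lemma trunc_eq_one {z : ℝ} (h : 1 ≤ z) : trunc z = 1 := by
  unfold trunc; rw [max_eq_right (by linarith), min_eq_left h]

/-- Exact simulation of Boolean circuits by perturbed linear circuits. -/
theorem boolean_simulation_correct (k N : ℕ) (gate : ℕ → BGate)
    (hwf : ∀ i, k < i → i ≤ N →
      match gate i with
      | .not j => j < i
      | .and j j' => j < i ∧ j' < i)
    (binp : ℕ → Bool) (inp : ℕ → ℝ)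
    (hinp : ∀ i, i ≤ k → inp i = if binp i then 1 else 0)
    (π : ℕ → ℝ) (hπ : ∀ i, π i ∈ Set.Ioo (-1 : ℝ) 1) :
    ∀ i, i ≤ N →
      (realVal k gate inp π i = 0 ∨ realVal k gate inp π i = 1) ∧
      realVal k gate inp π i = (if boolVal k gate binp i then 1 else 0) := by
  intro i
  induction i using Nat.strong_induction_on with
  | _ i ih =>
    intro hiN
    by_cases hik : i ≤ k
    · rw [realVal, boolVal, if_pos hik, if_pos hik, hinp i hik]
      constructor
      · cases binp i <;> simp
      · rfl
    · push_neg at hik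
      have hg := hwf i hik hiN
      rw [realVal, boolVal, if_neg (not_le.mpr hik), if_neg (not_le.mpr hik)]
      cases hgate : gate i with
      | not j =>
        rw [hgate] at hg
        replace hg : j < i := hg
        dsimp only
        rw [dif_pos hg]; simp only [dif_pos hg]
        obtain ⟨hj01, hjeq⟩ := ih j hg (le_trans (le_of_lt hg) hiN)
        rw [hjeq]
        cases boolVal k gate binp j <;> simp
      | and j j' =>
        rw [hgate] at hg
        replace hg : j < i ∧ j' < i := hg
        dsimp only
        rw [dif_pos hg]; simp only [dif_pos hg]
        obtain ⟨_, hjeq⟩ := ih j hg.1 (le_trans (le_of_lt hg.1) hiN)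
        obtain ⟨_, hjeq'⟩ := ih j' hg.2 (le_trans (le_of_lt hg.2) hiN)
        rw [hjeq, hjeq']
        obtain ⟨hp1, hp2⟩ := hπ i
        cases hb : boolVal k gate binp j <;> cases hb' : boolVal k gate binp j' <;>
          simp only [Bool.false_and, Bool.true_and, Bool.and_true, Bool.and_false,
            if_true, if_false]
        · rw [trunc_eq_zero (by norm_num; linarith)]; simp
        · rw [trunc_eq_zero (by norm_num; linarith)]; simp
        · rw [trunc_eq_zero (by norm_num; linarith)]; simp
        · rw [trunc_eq_one (by norm_num; linarith)]; simp
end
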